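/- Let E be a 3-dimensional F₂-vector space and M₁ ≠ M₂ two subgroups of order 7 of GL(E). Then N(M₁) ∩ N(M₂) is a subgroup of order 3. -/

import Mathlib

open Subgroup MulAction

private lemma fact168' : (Nat.factorization 168) 7 = 1 := by
  have : (168 : ℕ) = 7 * 24 := by norm_num
  rw [this, Nat.factorization_mul (by norm_num) (by norm_num)]
  rw [Nat.Prime.factorization (by norm_num)]
  simp [Nat.factorization_eq_zero_of_not_dvd (by norm_num : ¬ (7:ℕ) ∣ 24)]

private lemma fact21' : (Nat.factorization 21) 7 = 1 := by
  have : (21 : ℕ) = 7 * 3 := by norm_num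
  rw [this, Nat.factorization_mul (by norm_num) (by norm_num)]
  rw [Nat.Prime.factorization (by norm_num)]
  simp [Nat.factorization_eq_zero_of_not_dvd (by norm_num : ¬ (7:ℕ) ∣ 3)]

/-- In a subgroup of order 21, any two subgroups of order 7 coincide. -/
private lemma lemA' {G : Type*} [Group G] [Finite G] {N P Q : Subgroup G}
    (hN : Nat.card N = 21) (hP : Nat.card P = 7) (hQ : Nat.card Q = 7)
    (hPN : P ≤ N) (hQN : Q ≤ N) : P = Q := by
  haveI : Fact (Nat.Prime 7) := ⟨by norm_num⟩
  have hP' : Nat.card (P.subgroupOf N) = 7 := by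
    rw [Nat.card_congr (subgroupOfEquivOfLe hPN).toEquiv]; exact hP
  have hQ' : Nat.card (Q.subgroupOf N) = 7 := by
    rw [Nat.card_congr (subgroupOfEquivOfLe hQN).toEquiv]; exact hQ
  have hfact : 7 ^ (Nat.card N).factorization 7 = 7 := by rw [hN, fact21']; ring
  let S : Sylow 7 ↥N := Sylow.ofCard (P.subgroupOf N) (by rw [hP', hfact])
  let T : Sylow 7 ↥N := Sylow.ofCard (Q.subgroupOf N) (by rw [hQ', hfact])
  have hScoe : (S : Subgroup ↥N) = P.subgroupOf N := Sylow.coe_ofCard _ _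
  have hTcoe : (T : Subgroup ↥N) = Q.subgroupOf N := Sylow.coe_ofCard _ _
  have hidx : (S : Subgroup ↥N).index = 3 := by
    have h := Subgroup.card_mul_index (S : Subgroup ↥N)
    rw [hScoe, hP', hN] at h
    rw [hScoe]
    omega
  have hdvd : Nat.card (Sylow 7 ↥N) ∣ 3 := hidx ▸ Sylow.card_dvd_index S
  have hmod : Nat.card (Sylow 7 ↥N) % 7 = 1 % 7 := card_sylow_modEq_one 7 ↥N
  have hcard1 : Nat.card (Sylow 7 ↥N) = 1 := by
    have h3 : Nat.card (Sylow 7 ↥N) ≤ 3 := Nat.le_of_dvd (by norm_num) hdvd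
    interval_cases (Nat.card (Sylow 7 ↥N)) <;> omega
  have hsub : Subsingleton (Sylow 7 ↥N) := (Nat.card_eq_one_iff_unique.mp hcard1).1
  have hPQ' : P.subgroupOf N = Q.subgroupOf N := by
    rw [← hScoe, ← hTcoe, Subsingleton.elim S T]
  have hmap : (P.subgroupOf N).map N.subtype = (Q.subgroupOf N).map N.subtype := by
    rw [hPQ']
  rwa [subgroupOf_map_subtype, subgroupOf_map_subtype, inf_eq_left.2 hPN,
    inf_eq_left.2 hQN] at hmap

/-- In a finite group of order 168, the intersection of the normalizers of two
distinct subgroups of order 7 has order 3. -/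
private lemma key' {G : Type*} [Group G] [Finite G] (hG : Nat.card G = 168)
    (M₁ M₂ : Subgroup G) (h₁ : Nat.card M₁ = 7) (h₂ : Nat.card M₂ = 7) (hne : M₁ ≠ M₂) :
    Nat.card ((Subgroup.normalizer (M₁ : Set G)) ⊓ (Subgroup.normalizer (M₂ : Set G)) : Subgroup G) = 3 := by
  haveI : Fact (Nat.Prime 7) := ⟨by norm_num⟩
  have hfact : 7 ^ (Nat.card G).factorization 7 = 7 := by rw [hG, fact168']; ring
  let P₁ : Sylow 7 G := Sylow.ofCard M₁ (by rw [h₁, hfact])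
  let P₂ : Sylow 7 G := Sylow.ofCard M₂ (by rw [h₂, hfact])
  have hc₁ : (P₁ : Subgroup G) = M₁ := Sylow.coe_ofCard _ _
  have hc₂ : (P₂ : Subgroup G) = M₂ := Sylow.coe_ofCard _ _
  -- the number of Sylow 7-subgroups is 8
  have hidx : (P₁ : Subgroup G).index = 24 := by
    have h := Subgroup.card_mul_index (P₁ : Subgroup G)
    rw [hc₁, h₁, hG] at h
    rw [hc₁]; omega
  have hdvd : Nat.card (Sylow 7 G) ∣ 24 := hidx ▸ Sylow.card_dvd_index P₁
  have hmod : Nat.card (Sylow 7 G) % 7 = 1 % 7 := card_sylow_modEq_one 7 G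
  have hne1 : Nat.card (Sylow 7 G) ≠ 1 := by
    intro h
    haveI hsub := (Nat.card_eq_one_iff_unique.mp h).1
    exact hne (by rw [← hc₁, ← hc₂, Subsingleton.elim P₁ P₂])
  have hn8 : Nat.card (Sylow 7 G) = 8 := by
    have h24 : Nat.card (Sylow 7 G) ≤ 24 := Nat.le_of_dvd (by norm_num) hdvd
    interval_cases (Nat.card (Sylow 7 G)) <;> omega
  -- normalizers have order 21
  have hN : ∀ P : Sylow 7 G, Nat.card (Subgroup.normalizer ((P : Subgroup G) : Set G)) = 21 := by
    intro P
    have h8 : (Subgroup.normalizer ((P : Subgroup G) : Set G)).index = 8 := by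
      exact (Sylow.card_eq_index_normalizer P).symm.trans hn8
    have h := Subgroup.card_mul_index (Subgroup.normalizer ((P : Subgroup G) : Set G))
    rw [h8, hG] at h; omega
  have hN₁ : Nat.card (Subgroup.normalizer (M₁ : Set G)) = 21 := by rw [← hc₁]; exact hN P₁
  have hN₂ : Nat.card (Subgroup.normalizer (M₂ : Set G)) = 21 := by rw [← hc₂]; exact hN P₂
  -- the stabilizer of `P₂` in a subgroup `K` is `N(M₂) ∩ K`
  have hstab : ∀ K : Subgroup G, stabilizer ↥K P₂ = ((Subgroup.normalizer (M₂ : Set G))).subgroupOf K := by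
    intro K
    ext x
    rw [mem_stabilizer_iff, Subgroup.mem_subgroupOf, ← hc₂,
      ]
    exact Sylow.smul_eq_iff_mem_normalizer
  -- the orbit of `P₂` under `M₁` has exactly 7 elements
  have horb1 : Nat.card (orbit ↥M₁ P₂) = 7 := by
    have hos := Nat.card_congr (MulAction.orbitProdStabilizerEquivGroup ↥M₁ P₂)
    rw [Nat.card_prod, h₁] at hos
    have hdvd7 : Nat.card (orbit ↥M₁ P₂) ∣ 7 := ⟨_, hos.symm⟩
    rcases (Nat.Prime.eq_one_or_self_of_dvd (by norm_num) _ hdvd7) with h1 | h7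
    · -- orbit has one element: M₁ normalizes M₂, contradiction
      exfalso
      have hstabcard : Nat.card (stabilizer ↥M₁ P₂) = 7 := by
        rw [h1, one_mul] at hos; exact hos
      have htop : stabilizer ↥M₁ P₂ = ⊤ :=
        Subgroup.eq_top_of_card_eq _ (by rw [hstabcard, h₁])
      have hle : M₁ ≤ (Subgroup.normalizer (M₂ : Set G)) := by
        intro m hm
        have : (⟨m, hm⟩ : ↥M₁) ∈ stabilizer ↥M₁ P₂ := htop ▸ Subgroup.mem_top _
        rw [hstab M₁] at this
        exact this
      exact hne (lemA' hN₂ h₁ h₂ hle Subgroup.le_normalizer)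
    · exact h7
  -- the orbit of `P₂` under `N(M₁)` has exactly 7 elements
  have horbsub : orbit ↥M₁ P₂ ⊆ orbit ↥(Subgroup.normalizer (M₁ : Set G)) P₂ := by
    rintro x ⟨m, rfl⟩
    exact ⟨⟨(m : G), Subgroup.le_normalizer m.2⟩, rfl⟩
  have hos := Nat.card_congr (MulAction.orbitProdStabilizerEquivGroup ↥(Subgroup.normalizer (M₁ : Set G)) P₂)
  rw [Nat.card_prod, hN₁] at hos
  have horbdvd : Nat.card (orbit ↥(Subgroup.normalizer (M₁ : Set G)) P₂) ∣ 21 := ⟨_, hos.symm⟩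
  have horble : Nat.card (orbit ↥(Subgroup.normalizer (M₁ : Set G)) P₂) ≤ 8 := by
    rw [← hn8]
    exact Nat.card_le_card_of_injective _ Subtype.val_injective
  have horbge : 7 ≤ Nat.card (orbit ↥(Subgroup.normalizer (M₁ : Set G)) P₂) := by
    have := Nat.card_mono (Set.toFinite _) horbsub
    omega
  have horb7 : Nat.card (orbit ↥(Subgroup.normalizer (M₁ : Set G)) P₂) = 7 := by
    interval_cases (Nat.card (orbit ↥(Subgroup.normalizer (M₁ : Set G)) P₂)) <;> omega
  -- conclude by orbit–stabilizer: `N(M₁) ∩ N(M₂)` has order `21 / 7 = 3`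
  rw [horb7, hstab (Subgroup.normalizer (M₁ : Set G))] at hos
  have h3 : Nat.card (((Subgroup.normalizer (M₂ : Set G))).subgroupOf (Subgroup.normalizer (M₁ : Set G))) = 3 := by omega
  rw [← Subgroup.inf_subgroupOf_right,
    Nat.card_congr (Subgroup.subgroupOfEquivOfLe inf_le_right).toEquiv] at h3
  rwa [inf_comm]

/-- For two distinct subgroups `M₁ ≠ M₂` of order 7 of `GL(E)` (with `E`
3-dimensional over `F₂`), the intersection of their normalizers is a subgroup
of order 3. -/
theorem stmt_14 (E : Type*) [AddCommGroup E] [Module (ZMod 2) E]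
    (hdim : Module.finrank (ZMod 2) E = 3)
    (M₁ M₂ : Subgroup (E ≃ₗ[ZMod 2] E))
    (h₁ : Nat.card M₁ = 7) (h₂ : Nat.card M₂ = 7) (hne : M₁ ≠ M₂) :
    Nat.card (Subgroup.normalizer (M₁ : Set (E ≃ₗ[ZMod 2] E)) ⊓ Subgroup.normalizer (M₂ : Set (E ≃ₗ[ZMod 2] E)) : Subgroup (E ≃ₗ[ZMod 2] E)) = 3 := by
  haveI : Module.Finite (ZMod 2) E := Module.finite_of_finrank_eq_succ hdim
  let b : Module.Basis (Fin 3) (ZMod 2) E := Module.finBasisOfFinrankEq (ZMod 2) E hdim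
  let e1 : (E ≃ₗ[ZMod 2] E) ≃ LinearMap.GeneralLinearGroup (ZMod 2) E :=
    (LinearMap.GeneralLinearGroup.generalLinearEquiv (ZMod 2) E).symm.toEquiv
  let e2 : LinearMap.GeneralLinearGroup (ZMod 2) E ≃ GL (Fin 3) (ZMod 2) :=
    (Units.mapEquiv (LinearMap.toMatrixAlgEquiv b).toMulEquiv).toEquiv
  have e := e1.trans e2
  haveI : Finite (E ≃ₗ[ZMod 2] E) := Finite.of_equiv _ e.symm
  have hcard : Nat.card (E ≃ₗ[ZMod 2] E) = 168 := by
    rw [Nat.card_congr e, Matrix.card_GL_field]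
    simp [Fin.prod_univ_three, ZMod.card]
  exact key' hcard M₁ M₂ h₁ h₂ hne
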